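/- Let G = (V,E) be a finite simple graph, p ∈ [0,1]^V in the Shearer set of G, W ⊆ V and v ∈ V ∖ W with Ξ_{G[W]}(p) > 0. Then the one-vertex open extension probability satisfies Θ_{W,v}(p) := Ξ_{G[W∪{v}]}(p) / Ξ_{G[W]}(p) ≤ p_v. -/

import Mathlib

open MeasureTheory Finset
open scoped Classical

/-- The critical function Ξ_{G[W]}(p). -/
noncomputable def Xi {V : Type*} (G : SimpleGraph V) (W : Finset V) (p : V → ℝ) : ℝ :=
  ∑ T ∈ W.powerset,
    if ∀ u ∈ T, ∀ w ∈ T, ¬ G.Adj u w then ∏ v ∈ T, -(1 - p v) else 0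

lemma Xi_insert {V : Type*} [DecidableEq V] (G : SimpleGraph V) (p : V → ℝ)
    (W : Finset V) (v : V) (hv : v ∉ W) :
    Xi G (insert v W) p
      = Xi G W p - (1 - p v) * Xi G (W.filter fun u => ¬ G.Adj v u) p := by
  classical
  set Wf := W.filter fun u => ¬ G.Adj v u with hWf
  have key : (∑ T ∈ W.powerset,
      (if ∀ u ∈ insert v T, ∀ w ∈ insert v T, ¬ G.Adj u w then
        ∏ x ∈ insert v T, -(1 - p x) else 0))
      = - ((1 - p v) * Xi G Wf p) := by
    have step1 : ∀ T ∈ W.powerset,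
        (if ∀ u ∈ insert v T, ∀ w ∈ insert v T, ¬ G.Adj u w then
          ∏ x ∈ insert v T, -(1 - p x) else 0)
        = (if T ∈ Wf.powerset ∧ (∀ u ∈ T, ∀ w ∈ T, ¬ G.Adj u w) then
            -(1 - p v) * ∏ x ∈ T, -(1 - p x) else 0) := by
      intro T hT
      rw [Finset.mem_powerset] at hT
      have hvT : v ∉ T := fun h => hv (hT h)
      have hprod : ∏ x ∈ insert v T, -(1 - p x) = -(1 - p v) * ∏ x ∈ T, -(1 - p x) :=
        Finset.prod_insert hvT
      have hcond : (∀ u ∈ insert v T, ∀ w ∈ insert v T, ¬ G.Adj u w) ↔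
          (T ∈ Wf.powerset ∧ (∀ u ∈ T, ∀ w ∈ T, ¬ G.Adj u w)) := by
        constructor
        · intro h
          refine ⟨Finset.mem_powerset.mpr ?_, fun u hu w hw => h u (Finset.mem_insert_of_mem hu)
              w (Finset.mem_insert_of_mem hw)⟩
          intro u hu
          rw [hWf, Finset.mem_filter]
          exact ⟨hT hu, h v (Finset.mem_insert_self _ _) u (Finset.mem_insert_of_mem hu)⟩
        · rintro ⟨hTf, hind⟩ u hu w hw
          rw [Finset.mem_powerset] at hTf
          rcases Finset.mem_insert.mp hu with h1 | h1
          · rcases Finset.mem_insert.mp hw with h2 | h2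
            · subst h1; subst h2; exact G.loopless.irrefl _
            · subst h1; exact (Finset.mem_filter.mp (hTf h2)).2
          · rcases Finset.mem_insert.mp hw with h2 | h2
            · subst h2; intro hadj
              exact (Finset.mem_filter.mp (hTf h1)).2 hadj.symm
            · exact hind u h1 w h2
      rw [hprod, if_congr hcond rfl rfl]
    rw [Finset.sum_congr rfl step1]
    have hsub : Wf.powerset ⊆ W.powerset :=
      Finset.powerset_mono.mpr (Finset.filter_subset _ _)
    rw [← Finset.sum_subset hsub (by
      intro T _ hTnot
      rw [if_neg]
      intro h
      exact hTnot h.1)]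
    rw [Xi, Finset.mul_sum, ← Finset.sum_neg_distrib]
    refine Finset.sum_congr rfl fun T hT => ?_
    by_cases h : ∀ u ∈ T, ∀ w ∈ T, ¬ G.Adj u w
    · rw [if_pos (⟨hT, h⟩ : T ∈ Wf.powerset ∧ ∀ u ∈ T, ∀ w ∈ T, ¬ G.Adj u w), if_pos h]; ring
    · rw [if_neg (fun hc => h hc.2), if_neg h]; ring
  rw [Xi, Finset.sum_powerset_insert hv, key]
  simp only [Xi]
  ring

lemma Xi_erase_le {V : Type*} [DecidableEq V] (G : SimpleGraph V) (p : V → ℝ)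
    (hp : ∀ v, p v ∈ Set.Icc (0:ℝ) 1)
    (hShearer : ∀ W : Finset V, 0 ≤ Xi G W p)
    (W : Finset V) (w : V) (hw : w ∈ W) :
    Xi G W p ≤ Xi G (W.erase w) p := by
  have h := Xi_insert G p (W.erase w) w (Finset.notMem_erase _ _)
  rw [Finset.insert_erase hw] at h
  rw [h]
  have hq : 0 ≤ 1 - p w := by linarith [(hp w).2]
  nlinarith [hShearer ((W.erase w).filter fun u => ¬ G.Adj w u)]

lemma Xi_mono {V : Type*} [DecidableEq V] (G : SimpleGraph V) (p : V → ℝ)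
    (hp : ∀ v, p v ∈ Set.Icc (0:ℝ) 1)
    (hShearer : ∀ W : Finset V, 0 ≤ Xi G W p)
    (W : Finset V) : ∀ W' ⊆ W, Xi G W p ≤ Xi G W' p := by
  induction W using Finset.strongInduction with
  | _ W ih =>
    intro W' hW'
    by_cases h : W' = W
    · subst h; exact le_refl _
    · obtain ⟨w, hwW, hwW'⟩ : ∃ w ∈ W, w ∉ W' := by
        by_contra hc
        push_neg at hc
        exact h (Finset.Subset.antisymm hW' hc)
      have h1 : Xi G W p ≤ Xi G (W.erase w) p :=
        Xi_erase_le G p hp hShearer W w hwW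
      have h2 : Xi G (W.erase w) p ≤ Xi G W' p := by
        refine ih (W.erase w) (Finset.erase_ssubset hwW) W' ?_
        intro x hx
        exact Finset.mem_erase.mpr ⟨fun he => hwW' (he ▸ hx), hW' hx⟩
      linarith

theorem stmt11 {V : Type*} [Fintype V] [DecidableEq V] (G : SimpleGraph V)
    (p : V → ℝ) (hp : ∀ v, p v ∈ Set.Icc (0:ℝ) 1)
    (hShearer : ∀ W : Finset V, 0 ≤ Xi G W p)
    (W : Finset V) (v : V) (hv : v ∉ W) (hW : 0 < Xi G W p) :
    Xi G (insert v W) p / Xi G W p ≤ p v := by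
  rw [div_le_iff₀ hW]
  rw [Xi_insert G p W v hv]
  have hmono : Xi G W p ≤ Xi G (W.filter fun u => ¬ G.Adj v u) p :=
    Xi_mono G p hp hShearer W _ (Finset.filter_subset _ _)
  have hq : 0 ≤ 1 - p v := by linarith [(hp v).2]
  nlinarith
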